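/- Let (X,G,Φ) be an equicontinuous Cantor minimal system with Ellis group Ḡ, let x ∈ X, let Ḡ_x be the isotropy subgroup of x, and let N̂(Ḡ_x) be the normalizer of Ḡ_x in Ḡ. Then the set of orbits of the action of Aut(X,G,Φ) on X is in bijection with the coset space Ḡ/N̂(Ḡ_x); in particular, the number of orbits of Aut(X,G,Φ) equals the index of N̂(Ḡ_x) in Ḡ. -/

import Mathlib

namespace CantorChains

variable {X : Type*} [TopologicalSpace X]

/-- The group of self-homeomorphisms of `X`, with composition as multiplication. -/
instance : Group (X ≃ₜ X) where
  mul f g := g.trans f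
  one := Homeomorph.refl X
  inv := Homeomorph.symm
  mul_assoc _ _ _ := Homeomorph.ext fun _ => rfl
  one_mul _ := Homeomorph.ext fun _ => rfl
  mul_one _ := Homeomorph.ext fun _ => rfl
  inv_mul_cancel f := Homeomorph.ext fun x => f.symm_apply_apply x

@[simp] lemma homeo_mul_apply (f g : X ≃ₜ X) (x : X) : (f * g) x = f (g x) := rfl
@[simp] lemma homeo_one_apply (x : X) : (1 : X ≃ₜ X) x = x := rfl

/-- The compact-open topology on the group of homeomorphisms (for a compact
metric space this is the topology of uniform convergence). -/
instance : TopologicalSpace (X ≃ₜ X) :=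
  TopologicalSpace.induced (fun h : X ≃ₜ X => (h : C(X, X))) inferInstance

/-- The tautological action of the homeomorphism group of `X` on `X`. -/
instance : MulAction (X ≃ₜ X) X where
  smul h x := h x
  one_smul _ := rfl
  mul_smul _ _ _ := rfl

@[simp] lemma homeo_smul_def (h : X ≃ₜ X) (x : X) : h • x = h x := rfl

variable {G : Type*} [Group G]

/-- The group of automorphisms of the action `Φ`: the homeomorphisms of `X`
commuting with every `Φ g`. -/
def autGroup (Φ : G →* (X ≃ₜ X)) : Subgroup (X ≃ₜ X) where
  carrier := {h | ∀ (g : G) (y : X), h (Φ g y) = Φ g (h y)}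
  one_mem' := fun _ _ => rfl
  mul_mem' := fun {a b} ha hb g y => by
    show a (b (Φ g y)) = Φ g (a (b y))
    rw [hb, ha]
  inv_mem' := fun {a} ha g y => by
    apply a.injective
    show a (a.symm (Φ g y)) = a (Φ g (a.symm y))
    rw [a.apply_symm_apply, ha, a.apply_symm_apply]

end CantorChains

namespace CantorChains

section AuxLemmas

open Topology

lemma coe_inducing {X : Type*} [TopologicalSpace X] :
    Topology.IsInducing (fun h : X ≃ₜ X => (h : C(X, X))) := ⟨rfl⟩

lemma homeo_symm_apply_eq {X : Type*} [TopologicalSpace X] (e : X ≃ₜ X) {x y : X} :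
    e.symm x = y ↔ x = e y :=
  ⟨fun h => by rw [← h, e.apply_symm_apply], fun h => by rw [h, e.symm_apply_apply]⟩

lemma homeo_eq_symm_apply {X : Type*} [TopologicalSpace X] (e : X ≃ₜ X) {x y : X} :
    x = e.symm y ↔ e x = y := by
  constructor
  · intro h; rw [h, e.apply_symm_apply]
  · intro h; rw [← h, e.symm_apply_apply]

lemma coe_inv_apply {X : Type*} [TopologicalSpace X] (a : X ≃ₜ X) (y : X) :
    (a⁻¹ : X ≃ₜ X) y = a.symm y := rfl

variable {G X : Type*} [Group G] [MetricSpace X] [CompactSpace X]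

lemma uec (Ψ : G → C(X,X))
    (heq : ∀ ε > 0, ∃ δ > 0, ∀ (g : G) (y z : X), dist y z < δ → dist (Ψ g y) (Ψ g z) < ε) :
    Set.Equicontinuous (Set.range fun g : G => ⇑(Ψ g)) := by
  have hF : Equicontinuous (fun g : G => ⇑(Ψ g)) := by
    apply UniformEquicontinuous.equicontinuous
    rw [Metric.uniformEquicontinuous_iff]
    intro ε hε
    obtain ⟨δ, hδ, h⟩ := heq ε hε
    exact ⟨δ, hδ, fun y z hyz g => h g y z hyz⟩
  intro x
  have h2 : (Subtype.val : (Set.range fun g : G => ⇑(Ψ g)) → X → X) =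
      (fun g : G => ⇑(Ψ g)) ∘ (fun f => f.2.choose) := by
    funext f
    exact f.2.choose_spec.symm
  rw [show (Subtype.val : (Set.range fun g : G => ⇑(Ψ g)) → X → X) =
    (fun g : G => ⇑(Ψ g)) ∘ (fun f => f.2.choose) from h2]
  exact hF.comp _ x

lemma cpt (Ψ : G → C(X,X))
    (heq : ∀ ε > 0, ∃ δ > 0, ∀ (g : G) (y z : X), dist y z < δ → dist (Ψ g y) (Ψ g z) < ε) :
    IsCompact (closure (Set.range fun g : G => (Ψ g : C(X,X)))) := by
  set S0 : Set C(X,X) := Set.range fun g : G => (Ψ g : C(X,X)) with hS0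
  set A0 : Set (X → X) := Set.range fun g : G => ⇑(Ψ g) with hA0
  have hA0ec : A0.Equicontinuous := uec Ψ heq
  set P : Set (X → X) := closure A0 with hP
  have hPec : P.Equicontinuous := hA0ec.closure
  have hPcl : IsClosed P := isClosed_closure
  have hPcpt : IsCompact P := hPcl.isCompact
  set S : Set C(X,X) := (fun f : C(X,X) => ⇑f) ⁻¹' P with hS
  have hcoe : Continuous (fun f : C(X,X) => ⇑f) := continuous_coeFun
  have himg : ContinuousMap.toFun '' S = P := by
    apply Set.Subset.antisymm
    · rintro _ ⟨f, hf, rfl⟩; exact hf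
    · intro f hf
      exact ⟨⟨f, hPec.continuous_of_mem hf⟩, hf, rfl⟩
  have hSec : Equicontinuous (fun f : ↥S => ⇑(f : C(X,X))) := by
    have h3 : (fun f : ↥S => ⇑(f : C(X,X))) =
        ((↑) : P → X → X) ∘ (fun f : ↥S => (⟨⇑(f : C(X,X)), f.2⟩ : P)) := rfl
    rw [h3]
    exact Equicontinuous.comp hPec _
  have hScpt : IsCompact S := ArzelaAscoli.isCompact_of_equicontinuous S (himg ▸ hPcpt) hSec
  apply hScpt.of_isClosed_subset isClosed_closure
  apply closure_minimal _ (hPcl.preimage hcoe)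
  rintro _ ⟨g, rfl⟩
  exact subset_closure ⟨g, rfl⟩

variable (Φ : G →* (X ≃ₜ X))

lemma closure_bij
    (heq : ∀ ε > 0, ∃ δ > 0, ∀ (g : G) (y z : X), dist y z < δ → dist (Φ g y) (Φ g z) < ε) :
    ∀ f ∈ closure (Set.range fun g : G => (Φ g : C(X,X))), Function.Bijective f := by
  intro f hf
  constructor
  · intro y z hyz
    by_contra hne
    have hd : 0 < dist y z := dist_pos.mpr hne
    obtain ⟨δ, hδ, h⟩ := heq (dist y z) hd
    obtain ⟨f', ⟨g, rfl⟩, hfg⟩ := Metric.mem_closure_iff.mp hf (δ/2) (by linarith)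
    have h1 : dist (Φ g y) (Φ g z) < δ := by
      calc dist (Φ g y) (Φ g z) ≤ dist (Φ g y) (f y) + dist (f y) (Φ g z) :=
            dist_triangle _ _ _
        _ = dist (Φ g y) (f y) + dist (f z) (Φ g z) := by rw [hyz]
        _ ≤ dist f (Φ g : C(X,X)) + dist f (Φ g : C(X,X)) := by
            gcongr
            · rw [dist_comm]
              exact ContinuousMap.dist_apply_le_dist (f := f) (g := (Φ g : C(X,X))) y
            · exact ContinuousMap.dist_apply_le_dist (f := f) (g := (Φ g : C(X,X))) z
        _ < δ := by linarith
    have h2 := h g⁻¹ (Φ g y) (Φ g z) h1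
    have e1 : Φ g⁻¹ (Φ g y) = y := by rw [map_inv]; exact (Φ g).symm_apply_apply y
    have e2 : Φ g⁻¹ (Φ g z) = z := by rw [map_inv]; exact (Φ g).symm_apply_apply z
    rw [e1, e2] at h2
    exact lt_irrefl _ h2
  · have hcl : IsClosed (Set.range f) := (isCompact_range f.continuous).isClosed
    have hdense : Dense (Set.range f) := by
      rw [Metric.dense_iff]
      intro z ε hε
      obtain ⟨f', ⟨g, rfl⟩, hfg⟩ := Metric.mem_closure_iff.mp hf ε hε
      refine ⟨f ((Φ g).symm z), ?_, Set.mem_range_self _⟩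
      rw [Metric.mem_ball]
      calc dist (f ((Φ g).symm z)) z = dist (f ((Φ g).symm z)) (Φ g ((Φ g).symm z)) := by
            rw [(Φ g).apply_symm_apply]
        _ ≤ dist f (Φ g : C(X,X)) := ContinuousMap.dist_apply_le_dist (f := f) (g := (Φ g : C(X,X))) _
        _ < ε := hfg
    intro z
    have hz : z ∈ Set.range f := by rw [← hcl.closure_eq]; exact hdense z
    exact hz

lemma closure_lift
    (heq : ∀ ε > 0, ∃ δ > 0, ∀ (g : G) (y z : X), dist y z < δ → dist (Φ g y) (Φ g z) < ε) :
    ∀ f ∈ closure (Set.range fun g : G => (Φ g : C(X,X))),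
    ∃ h : X ≃ₜ X, (h : C(X,X)) = f := by
  intro f hf
  have hbij := closure_bij Φ heq f hf
  let e : X ≃ X := Equiv.ofBijective f hbij
  have hc : Continuous e := f.continuous
  exact ⟨hc.homeoOfEquivCompactToT2, rfl⟩

variable (E : Subgroup (X ≃ₜ X))

lemma memE (hE : (E : Set (X ≃ₜ X)) = closure (Set.range fun g : G => Φ g)) (h : X ≃ₜ X) :
    h ∈ E ↔ (h : C(X,X)) ∈ closure (Set.range fun g : G => (Φ g : C(X,X))) := by
  rw [← SetLike.mem_coe, hE,
    coe_inducing.closure_eq_preimage_closure_image (Set.range fun g : G => Φ g)]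
  rw [Set.mem_preimage]
  have h1 : (fun h : X ≃ₜ X => (h : C(X,X))) '' (Set.range fun g : G => Φ g)
      = Set.range fun g : G => (Φ g : C(X,X)) := by
    rw [← Set.range_comp]; rfl
  rw [h1]

lemma PhiMemE (hE : (E : Set (X ≃ₜ X)) = closure (Set.range fun g : G => Φ g)) (g : G) :
    Φ g ∈ E := by
  rw [memE Φ E hE]
  exact subset_closure ⟨g, rfl⟩

lemma evalCont (z : X) : Continuous (fun k : ↥E => (k : X ≃ₜ X) z) := by
  have h1 : Continuous (fun k : ↥E => ((k : X ≃ₜ X) : C(X,X))) := by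
    exact coe_inducing.continuous.comp continuous_subtype_val
  have h2 : Continuous (fun f : C(X,X) => f z) :=
    ContinuousEvalConst.continuous_eval_const z
  exact h2.comp h1

lemma commE (hE : (E : Set (X ≃ₜ X)) = closure (Set.range fun g : G => Φ g))
    (h : X ≃ₜ X) (hh : ∀ (g : G) (y : X), h (Φ g y) = Φ g (h y)) (k : ↥E) (y : X) :
    h ((k : X ≃ₜ X) y) = (k : X ≃ₜ X) (h y) := by
  set T : Set C(X,X) := {f | ∀ y, h (f y) = f (h y)} with hT
  have hTclosed : IsClosed T := by
    have h4 : T = ⋂ y : X, {f : C(X,X) | h (f y) = f (h y)} := by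
      ext f; simp [hT]
    rw [h4]
    apply isClosed_iInter
    intro y
    exact isClosed_eq (h.continuous.comp (ContinuousEvalConst.continuous_eval_const y))
      (ContinuousEvalConst.continuous_eval_const (h y))
  have hmem : ((k : X ≃ₜ X) : C(X,X)) ∈ T := by
    apply closure_minimal _ hTclosed ((memE Φ E hE _).mp k.2)
    rintro _ ⟨g, rfl⟩
    intro y
    exact hh g y
  exact hmem y

lemma Ecompact (hE : (E : Set (X ≃ₜ X)) = closure (Set.range fun g : G => Φ g))
    (heq : ∀ ε > 0, ∃ δ > 0, ∀ (g : G) (y z : X), dist y z < δ → dist (Φ g y) (Φ g z) < ε) :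
    CompactSpace ↥E := by
  apply isCompact_iff_compactSpace.mp
  rw [coe_inducing.isCompact_iff]
  have h1 : (fun h : X ≃ₜ X => (h : C(X,X))) '' (E : Set (X ≃ₜ X))
      = closure (Set.range fun g : G => (Φ g : C(X,X))) := by
    apply Set.Subset.antisymm
    · rintro _ ⟨h, hh, rfl⟩
      exact (memE Φ E hE h).mp hh
    · intro f hf
      obtain ⟨h, rfl⟩ := closure_lift Φ heq f hf
      exact ⟨h, (memE Φ E hE h).mpr hf, rfl⟩
  rw [h1]
  exact cpt (fun g => (Φ g : C(X,X))) heq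

lemma pi_surj [CompactSpace ↥E]
    (hE : (E : Set (X ≃ₜ X)) = closure (Set.range fun g : G => Φ g))
    (hmin : ∀ y : X, Dense (Set.range fun g : G => Φ g y)) (x : X) :
    Function.Surjective (fun k : ↥E => (k : X ≃ₜ X) x) := by
  have hcont := evalCont (E := E) x
  have hcl : IsClosed (Set.range fun k : ↥E => (k : X ≃ₜ X) x) :=
    (isCompact_range hcont).isClosed
  have hsub : (Set.range fun g : G => Φ g x) ⊆ Set.range fun k : ↥E => (k : X ≃ₜ X) x := by
    rintro _ ⟨g, rfl⟩
    exact ⟨⟨Φ g, PhiMemE Φ E hE g⟩, rfl⟩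
  have hdense : Dense (Set.range fun k : ↥E => (k : X ≃ₜ X) x) :=
    (hmin x).mono hsub
  intro y
  have h5 : y ∈ Set.range fun k : ↥E => (k : X ≃ₜ X) x := by
    rw [← hcl.closure_eq]; exact hdense y
  exact h5

lemma pi_quot [CompactSpace ↥E]
    (hE : (E : Set (X ≃ₜ X)) = closure (Set.range fun g : G => Φ g))
    (hmin : ∀ y : X, Dense (Set.range fun g : G => Φ g y)) (x : X) :
    Topology.IsQuotientMap (fun k : ↥E => (k : X ≃ₜ X) x) :=
  ((evalCont (E := E) x).isClosedMap).isQuotientMap (evalCont (E := E) x)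
    (pi_surj Φ E hE hmin x)

end AuxLemmas


/-- For an equicontinuous Cantor minimal system with Ellis group `Ḡ`,
the set of orbits of `Aut(X,G,Φ)` on `X` is in bijection with the coset space
`Ḡ/N̂(Ḡ_x)`; in particular the number of orbits equals the index of the normalizer
`N̂(Ḡ_x)` in `Ḡ`. -/
theorem card_orbits_eq_index_normalizer {G X : Type*} [Group G] [MetricSpace X]
    [CompactSpace X] [TotallyDisconnectedSpace X] [PerfectSpace X] [Nonempty X]
    (Φ : G →* (X ≃ₜ X))
    (hmin : ∀ y : X, Dense (Set.range fun g : G => Φ g y))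
    (heq : ∀ ε > 0, ∃ δ > 0, ∀ (g : G) (y z : X), dist y z < δ → dist (Φ g y) (Φ g z) < ε)
    (E : Subgroup (X ≃ₜ X))
    (hE : (E : Set (X ≃ₜ X)) = closure (Set.range fun g : G => Φ g))
    (x : X) :
    Nonempty (Quotient (MulAction.orbitRel ↥(autGroup Φ) X) ≃
        (↥E ⧸ Subgroup.normalizer (MulAction.stabilizer ↥E x : Set ↥E))) ∧
    Nat.card (Quotient (MulAction.orbitRel ↥(autGroup Φ) X)) =
      (Subgroup.normalizer (MulAction.stabilizer ↥E x : Set ↥E)).index := by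
  classical
  haveI hEc : CompactSpace ↥E := Ecompact Φ E hE heq
  have hquot := pi_quot Φ E hE hmin x
  have hsurj := pi_surj Φ E hE hmin x
  set N := Subgroup.normalizer (MulAction.stabilizer ↥E x : Set ↥E) with hN
  let sel : X → ↥E := fun y => (hsurj y).choose
  have hsel : ∀ y : X, ((sel y : ↥E) : X ≃ₜ X) x = y := fun y => (hsurj y).choose_spec
  have hstab : ∀ s : ↥E, s ∈ MulAction.stabilizer ↥E x ↔ (s : X ≃ₜ X) x = x := by
    intro s
    rw [MulAction.mem_stabilizer_iff]
    exact Iff.rfl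
  -- well-definedness of the normalizer translation
  have hwd : ∀ n : ↥E, n ∈ N → ∀ k k' : ↥E, (k : X ≃ₜ X) x = (k' : X ≃ₜ X) x →
      (k : X ≃ₜ X) ((n : X ≃ₜ X) x) = (k' : X ≃ₜ X) ((n : X ≃ₜ X) x) := by
    intro n hn k k' hkk'
    have hs : k'⁻¹ * k ∈ MulAction.stabilizer ↥E x := by
      rw [hstab]
      show ((k'⁻¹ * k : ↥E) : X ≃ₜ X) x = x
      have : ((k'⁻¹ * k : ↥E) : X ≃ₜ X) x = ((k' : X ≃ₜ X)).symm ((k : X ≃ₜ X) x) := rfl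
      rw [this, hkk']
      exact (k' : X ≃ₜ X).symm_apply_apply x
    have hns : n⁻¹ * (k'⁻¹ * k) * n ∈ MulAction.stabilizer ↥E x := by
      have h2 : n * (n⁻¹ * (k'⁻¹ * k) * n) * n⁻¹ = k'⁻¹ * k := by group
      exact (Subgroup.mem_normalizer_iff.mp hn _).mpr (by rw [h2]; exact hs)
    rw [hstab] at hns
    have hns' : ((n : X ≃ₜ X)).symm (((k' : X ≃ₜ X)).symm ((k : X ≃ₜ X)
        ((n : X ≃ₜ X) x))) = x := hns
    rw [homeo_symm_apply_eq, homeo_symm_apply_eq] at hns'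
    exact hns'
  let Θ : ↥E → X → X := fun n y => ((sel y : ↥E) : X ≃ₜ X) ((n : X ≃ₜ X) x)
  have hΘ : ∀ n : ↥E, n ∈ N → ∀ k : ↥E,
      Θ n ((k : X ≃ₜ X) x) = (k : X ≃ₜ X) ((n : X ≃ₜ X) x) :=
    fun n hn k => hwd n hn (sel ((k : X ≃ₜ X) x)) k (hsel _)
  have hΘcont : ∀ n : ↥E, n ∈ N → Continuous (Θ n) := by
    intro n hn
    rw [hquot.continuous_iff]
    have h3 : (Θ n) ∘ (fun k : ↥E => (k : X ≃ₜ X) x)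
        = fun k : ↥E => (k : X ≃ₜ X) ((n : X ≃ₜ X) x) := by
      funext k
      exact hΘ n hn k
    rw [h3]
    exact evalCont E ((n : X ≃ₜ X) x)
  have hΘinv : ∀ n : ↥E, n ∈ N → ∀ y, Θ n⁻¹ (Θ n y) = y := by
    intro n hn y
    have h1 : Θ n y = ((sel y * n : ↥E) : X ≃ₜ X) x := rfl
    rw [h1, hΘ n⁻¹ (inv_mem hn) (sel y * n)]
    show ((sel y : ↥E) : X ≃ₜ X) ((n : X ≃ₜ X) (((n : X ≃ₜ X)).symm x)) = y
    rw [Homeomorph.apply_symm_apply]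
    exact hsel y
  -- each normalizer element gives an automorphism
  have hmkAut : ∀ n : ↥E, n ∈ N → ∃ h : ↥(autGroup Φ), ∀ y, (h : X ≃ₜ X) y = Θ n y := by
    intro n hn
    have hrinv : ∀ y, Θ n (Θ n⁻¹ y) = y := by
      intro y
      have := hΘinv n⁻¹ (inv_mem hn) y
      rwa [inv_inv] at this
    let e : X ≃ X := ⟨Θ n, Θ n⁻¹, hΘinv n hn, hrinv⟩
    have hc : Continuous e := hΘcont n hn
    let h : X ≃ₜ X := hc.homeoOfEquivCompactToT2
    have hmem : h ∈ autGroup Φ := by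
      intro g y
      show Θ n (Φ g y) = Φ g (Θ n y)
      have h1 : Φ g y = (((⟨Φ g, PhiMemE Φ E hE g⟩ : ↥E) * sel y : ↥E) : X ≃ₜ X) x := by
        show Φ g y = Φ g (((sel y : ↥E) : X ≃ₜ X) x)
        rw [hsel y]
      rw [h1, hΘ n hn _]
      rfl
    exact ⟨⟨h, hmem⟩, fun y => rfl⟩
  -- the coset map
  let F : X → ↥E ⧸ N := fun y => QuotientGroup.mk (sel y)
  have hdir1 : ∀ (h : X ≃ₜ X), h ∈ autGroup Φ → ∀ y : X, F (h y) = F y := by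
    intro h hh y
    have hcomm' : ∀ (k : ↥E) (w : X), h ((k : X ≃ₜ X) w) = (k : X ≃ₜ X) (h w) :=
      commE Φ E hE h hh
    have hsymm_comm : ∀ (k : ↥E) (w : X),
        h.symm ((k : X ≃ₜ X) w) = (k : X ≃ₜ X) (h.symm w) := by
      intro k w
      apply h.injective
      rw [h.apply_symm_apply, hcomm', h.apply_symm_apply]
    set k := sel y with hk
    set m := sel (h x) with hm
    have hmx : (m : X ≃ₜ X) x = h x := hsel (h x)
    have hm1 : ((m : X ≃ₜ X)).symm x = h.symm x := by
      have h1 : h.symm ((m : X ≃ₜ X) x) = (m : X ≃ₜ X) (h.symm x) := hsymm_comm m x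
      rw [hmx, h.symm_apply_apply] at h1
      symm
      rw [homeo_eq_symm_apply]
      exact h1.symm
    have hmN : m ∈ N := by
      rw [hN, Subgroup.mem_normalizer_iff]
      intro s
      rw [hstab, hstab]
      constructor
      · intro hs
        show (m : X ≃ₜ X) ((s : X ≃ₜ X) (((m : X ≃ₜ X)).symm x)) = x
        rw [hm1, ← hsymm_comm, hs, ← hm1, Homeomorph.apply_symm_apply]
      · intro hs
        have h1 : (m : X ≃ₜ X) ((s : X ≃ₜ X) (((m : X ≃ₜ X)).symm x)) = x := hs
        rw [hm1, ← hsymm_comm] at h1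
        have h2 : (m : X ≃ₜ X) (h.symm ((s : X ≃ₜ X) x))
            = (m : X ≃ₜ X) (((m : X ≃ₜ X)).symm x) := by
          rw [h1, Homeomorph.apply_symm_apply]
        have h3 := (m : X ≃ₜ X).injective h2
        rw [hm1] at h3
        exact h.symm.injective h3
    have hy : h y = ((k * m : ↥E) : X ≃ₜ X) x := by
      show h y = (k : X ≃ₜ X) ((m : X ≃ₜ X) x)
      rw [hmx, ← hcomm' k x, hsel y]
    have hs0 : (k * m)⁻¹ * sel (h y) ∈ MulAction.stabilizer ↥E x := by
      rw [hstab]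
      show (((k * m : ↥E) : X ≃ₜ X)).symm (((sel (h y) : ↥E) : X ≃ₜ X) x) = x
      rw [hsel (h y), hy, Homeomorph.symm_apply_apply]
    show QuotientGroup.mk (sel (h y)) = QuotientGroup.mk k
    rw [QuotientGroup.eq]
    have key : (sel (h y))⁻¹ * k = ((k * m)⁻¹ * sel (h y))⁻¹ * m⁻¹ := by group
    rw [key]
    exact mul_mem (inv_mem (Subgroup.le_normalizer hs0)) (inv_mem hmN)
  have hdir2 : ∀ y z : X, F y = F z →
      ∃ h : ↥(autGroup Φ), ((h : ↥(autGroup Φ)) : X ≃ₜ X) y = z := by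
    intro y z hFyz
    have hn : (sel y)⁻¹ * sel z ∈ N := QuotientGroup.eq.mp hFyz
    obtain ⟨h, hh⟩ := hmkAut _ hn
    refine ⟨h, ?_⟩
    rw [hh y]
    show ((sel y : ↥E) : X ≃ₜ X) ((((sel y)⁻¹ * sel z : ↥E) : X ≃ₜ X) x) = z
    have h1 : (((sel y)⁻¹ * sel z : ↥E) : X ≃ₜ X) x
        = (((sel y : ↥E) : X ≃ₜ X)).symm (((sel z : ↥E) : X ≃ₜ X) x) := rfl
    rw [h1, Homeomorph.apply_symm_apply]
    exact hsel z
  -- assemble the bijection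
  have hresp : ∀ y z : X, (MulAction.orbitRel ↥(autGroup Φ) X).r y z → F y = F z := by
    intro y z hyz
    obtain ⟨h, rfl⟩ := hyz
    exact hdir1 (h : X ≃ₜ X) h.2 z
  let Fbar : Quotient (MulAction.orbitRel ↥(autGroup Φ) X) → ↥E ⧸ N :=
    Quotient.lift F hresp
  have hinj : Function.Injective Fbar := by
    intro a b
    refine Quotient.inductionOn₂ a b ?_
    intro y z hyz
    obtain ⟨h, hh⟩ := hdir2 y z hyz
    have hrel : z ∈ MulAction.orbit ↥(autGroup Φ) y := ⟨h, hh⟩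
    exact Quotient.sound ((MulAction.orbitRel ↥(autGroup Φ) X).iseqv.symm hrel)
  have hsurj2 : Function.Surjective Fbar := by
    intro c
    obtain ⟨k, rfl⟩ := QuotientGroup.mk_surjective c
    refine ⟨Quotient.mk _ ((k : X ≃ₜ X) x), ?_⟩
    show QuotientGroup.mk (sel ((k : X ≃ₜ X) x)) = QuotientGroup.mk k
    rw [QuotientGroup.eq]
    apply Subgroup.le_normalizer
    rw [hstab]
    show (((sel ((k : X ≃ₜ X) x) : ↥E) : X ≃ₜ X)).symm ((k : X ≃ₜ X) x) = x
    rw [homeo_symm_apply_eq]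
    exact (hsel ((k : X ≃ₜ X) x)).symm
  let eqv : Quotient (MulAction.orbitRel ↥(autGroup Φ) X) ≃ (↥E ⧸ N) :=
    Equiv.ofBijective Fbar ⟨hinj, hsurj2⟩
  refine ⟨⟨eqv⟩, ?_⟩
  rw [Nat.card_congr eqv]
  rfl


end CantorChains
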